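/- Let s0 > 0. Then the integrals J(s) := ∫_{-∞}^{∞} (Φ'(z) - Φ'(z+s))² / ( (Φ(z+s) - Φ(z)) · (Φ(-z-s) + Φ(z)) ) dz are uniformly bounded over s ≥ s0; that is, there exists a constant C (depending only on s0) such that J(s) ≤ C for all s ≥ s0. -/

import Mathlib

open MeasureTheory Real Set Filter

/-- The standard normal density `Φ'(z) = (1/√(2π)) e^{-z²/2}`. -/
noncomputable def Φ' (z : ℝ) : ℝ := (Real.sqrt (2 * Real.pi))⁻¹ * Real.exp (-z ^ 2 / 2)

/-- The standard normal cumulative distribution function `Φ`. -/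
noncomputable def Φ (z : ℝ) : ℝ := ∫ u in Set.Iic z, Φ' u

lemma Φ'_pos (z : ℝ) : 0 < Φ' z := by
  unfold Φ'
  positivity

lemma Φ'_even (x : ℝ) : Φ' (-x) = Φ' x := by
  unfold Φ'
  rw [show -(-x) ^ 2 / 2 = -x ^ 2 / 2 by ring]

lemma Φ'_mono {u v : ℝ} (h : u ^ 2 ≤ v ^ 2) : Φ' v ≤ Φ' u := by
  unfold Φ'
  have := Real.sqrt_nonneg (2 * Real.pi)
  exact mul_le_mul_of_nonneg_left (Real.exp_le_exp.2 (by linarith)) (by positivity)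

lemma integrable_phi : Integrable Φ' := by
  have h : Integrable (fun x : ℝ => Real.exp (-(1/2) * x ^ 2)) :=
    integrable_exp_neg_mul_sq (by norm_num)
  have heq : Φ' = fun x : ℝ => (Real.sqrt (2 * Real.pi))⁻¹ * Real.exp (-(1/2) * x ^ 2) := by
    funext x
    unfold Φ'
    rw [show -x ^ 2 / 2 = -(1/2) * x ^ 2 by ring]
  rw [heq]
  exact h.const_mul _

lemma integral_phi : ∫ z : ℝ, Φ' z = 1 := by
  have h : ∫ z : ℝ, Φ' z = (Real.sqrt (2 * Real.pi))⁻¹ * ∫ z : ℝ, Real.exp (-(1/2) * z ^ 2) := by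
    rw [← integral_const_mul]
    congr 1; funext z; unfold Φ'; congr 1; ring
  rw [h, integral_gaussian, show Real.pi / (1/2) = 2 * Real.pi by ring]
  have h2 : (0:ℝ) < Real.sqrt (2 * Real.pi) := Real.sqrt_pos.2 (by positivity)
  field_simp

lemma Φ_sub {a b : ℝ} (h : a ≤ b) : Φ b - Φ a = ∫ u in Set.Ioc a b, Φ' u := by
  have hb : Φ b = Φ a + ∫ u in Set.Ioc a b, Φ' u := by
    unfold Φ
    rw [← setIntegral_union (Iic_disjoint_Ioc le_rfl) measurableSet_Ioc
      integrable_phi.integrableOn integrable_phi.integrableOn, Iic_union_Ioc_eq_Iic h]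
  linarith

lemma Φ_nonneg (z : ℝ) : 0 ≤ Φ z :=
  setIntegral_nonneg measurableSet_Iic fun u _ => (Φ'_pos u).le

lemma Φ_mono : Monotone Φ := by
  intro a b h
  have h1 := Φ_sub h
  have h2 : 0 ≤ ∫ u in Set.Ioc a b, Φ' u :=
    setIntegral_nonneg measurableSet_Ioc fun u _ => (Φ'_pos u).le
  linarith

lemma Φ_sub_ge {a b m : ℝ} (h : a ≤ b) (hm : ∀ u ∈ Set.Ioc a b, m ≤ Φ' u) :
    m * (b - a) ≤ Φ b - Φ a := by
  rw [Φ_sub h]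
  have h1 : ∫ _u in Set.Ioc a b, m ≤ ∫ u in Set.Ioc a b, Φ' u := by
    refine setIntegral_mono_on ?_ integrable_phi.integrableOn measurableSet_Ioc hm
    exact integrableOn_const (by rw [Real.volume_Ioc]; exact ENNReal.ofReal_ne_top)
  rwa [setIntegral_const, Real.volume_real_Ioc_of_le h,
    smul_eq_mul, mul_comm] at h1

lemma Φ_ge (z : ℝ) : Φ' (|z| + 1) ≤ Φ z := by
  have hm : ∀ u ∈ Set.Ioc (z - 1) z, Φ' (|z| + 1) ≤ Φ' u := by
    intro u hu
    refine Φ'_mono ?_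
    have h1 := le_abs_self z
    have h2 := neg_abs_le z
    have h3 := abs_nonneg z
    nlinarith [hu.1, hu.2]
  have h := Φ_sub_ge (by linarith : z - 1 ≤ z) hm
  have h4 := Φ_nonneg (z - 1)
  rw [show z - (z - 1) = 1 by ring, mul_one] at h
  linarith

lemma Φ_pos (z : ℝ) : 0 < Φ z := lt_of_lt_of_le (Φ'_pos _) (Φ_ge z)

lemma Φ_diff_pos {a b : ℝ} (h : a < b) : 0 < Φ b - Φ a := by
  have hm : ∀ u ∈ Set.Ioc a b, Φ' (|a| + |b|) ≤ Φ' u := by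
    intro u hu
    refine Φ'_mono ?_
    nlinarith [le_abs_self a, neg_abs_le a, le_abs_self b, neg_abs_le b, hu.1, hu.2,
      abs_nonneg a, abs_nonneg b]
  have h1 := Φ_sub_ge h.le hm
  nlinarith [Φ'_pos (|a| + |b|)]

lemma Φ_neg (z : ℝ) : Φ (-z) = 1 - Φ z := by
  have h1 : ∫ x in Set.Iic z, Φ' (-x) = ∫ x in Set.Ioi (-z), Φ' x := integral_comp_neg_Iic z Φ'
  simp only [Φ'_even] at h1
  have h3 : (∫ x in Set.Iic (-z), Φ' x) + ∫ x in Set.Ioi (-z), Φ' x = ∫ x : ℝ, Φ' x :=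
    intervalIntegral.integral_Iic_add_Ioi integrable_phi.integrableOn integrable_phi.integrableOn
  rw [integral_phi] at h3
  rw [← h1] at h3
  unfold Φ
  linarith

lemma Φ_zero : Φ 0 = 1 / 2 := by
  have := Φ_neg 0
  rw [neg_zero] at this
  linarith

noncomputable def ga (s0 : ℝ) : ℝ := max s0 1

noncomputable def gB (s0 : ℝ) : ℝ :=
  (Real.sqrt (2 * Real.pi))⁻¹ * Real.exp ((ga s0) ^ 2) * (2 / s0 + 1 / ((s0 / 2) * Φ' (s0 / 2)))

noncomputable def g (s0 z : ℝ) : ℝ :=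
  gB s0 * (Real.exp (-(z - ga s0) ^ 2 / 2) + Real.exp (-(z + ga s0) ^ 2 / 2))

lemma finish_aux {X G d1 d2 p q : ℝ} (hG : 0 ≤ G) (h1 : d1 ≤ p) (h2 : d2 ≤ q)
    (hd1 : 0 ≤ d1) (hd2 : 0 ≤ d2) (hX : X ≤ G * (d1 * d2)) : X ≤ G * (p * q) :=
  hX.trans (mul_le_mul_of_nonneg_left (mul_le_mul h1 h2 hd2 (hd1.trans h1)) hG)

set_option maxHeartbeats 2000000 in
lemma pt_bound (s0 s z : ℝ) (hs0 : 0 < s0) (hs : s0 ≤ s) :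
    Φ' z ^ 2 / ((Φ (z + s) - Φ z) * (Φ (-z - s) + Φ z)) ≤ g s0 z := by
  have hp : 0 < Φ (z + s) - Φ z := Φ_diff_pos (by linarith)
  have hq : 0 < Φ (-z - s) + Φ z := by
    have := Φ_pos (-z - s); have := Φ_pos z; linarith
  rw [div_le_iff₀ (mul_pos hp hq)]
  unfold g gB
  have hamax : max s0 1 = ga s0 := rfl
  generalize hA : ga s0 = a
  have ha0 : s0 ≤ a := by rw [← hA, ← hamax]; exact le_max_left s0 1
  have ha1 : (1:ℝ) ≤ a := by rw [← hA, ← hamax]; exact le_max_right s0 1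
  have hSP : (0:ℝ) < (Real.sqrt (2 * Real.pi))⁻¹ := by positivity
  have hc1 : (0:ℝ) < (s0 / 2) * Φ' (s0 / 2) := mul_pos (by linarith) (Φ'_pos _)
  have hconstpos : (0:ℝ) < 2 / s0 + 1 / ((s0 / 2) * Φ' (s0 / 2)) := by
    have h2 : (0:ℝ) < 1 / ((s0 / 2) * Φ' (s0 / 2)) := by positivity
    have h3 : (0:ℝ) < 2 / s0 := by positivity
    linarith
  have hGpos : (0:ℝ) ≤ (Real.sqrt (2 * Real.pi))⁻¹ * Real.exp (a ^ 2) *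
      (2 / s0 + 1 / ((s0 / 2) * Φ' (s0 / 2))) *
      (Real.exp (-(z - a) ^ 2 / 2) + Real.exp (-(z + a) ^ 2 / 2)) := by
    have := (Real.exp_pos (-(z - a) ^ 2 / 2)).le
    have := (Real.exp_pos (-(z + a) ^ 2 / 2)).le
    have := (Real.exp_pos (a ^ 2)).le
    nlinarith [mul_pos (mul_pos hSP (Real.exp_pos (a ^ 2))) hconstpos]
  rcases le_total 0 z with hz | hz
  · -- Case 1 : 0 ≤ z
    have h1 : s0 * Φ' (z + s0) ≤ Φ (z + s) - Φ z := by
      have hAA : Φ' (z + s0) * ((z + s0) - z) ≤ Φ (z + s0) - Φ z := by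
        refine Φ_sub_ge (by linarith) fun u hu => Φ'_mono ?_
        nlinarith [hu.1, hu.2]
      have hB : Φ (z + s0) ≤ Φ (z + s) := Φ_mono (by linarith)
      nlinarith [Φ'_pos (z + s0)]
    have h2 : (1:ℝ) / 2 ≤ Φ (-z - s) + Φ z := by
      have hB := Φ_mono hz
      have := Φ_zero
      have := Φ_nonneg (-z - s)
      linarith
    refine finish_aux hGpos h1 h2 (mul_nonneg hs0.le (Φ'_pos _).le) (by norm_num) ?_
    have e1 : Φ' z ^ 2 = ((Real.sqrt (2 * Real.pi))⁻¹) ^ 2 *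
        Real.exp (-z ^ 2 / 2 + -z ^ 2 / 2) := by
      unfold Φ'; rw [Real.exp_add]; ring
    have e2 : ((Real.sqrt (2 * Real.pi))⁻¹) ^ 2 * Real.exp (-z ^ 2 / 2 + -z ^ 2 / 2) ≤
        ((Real.sqrt (2 * Real.pi))⁻¹) ^ 2 *
          Real.exp (a ^ 2 + -(z - a) ^ 2 / 2 + -(z + s0) ^ 2 / 2) := by
      refine mul_le_mul_of_nonneg_left (Real.exp_le_exp.2 ?_) (by positivity)
      nlinarith [mul_nonneg (sub_nonneg.2 ha0) (by linarith : (0:ℝ) ≤ a + s0),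
        mul_nonneg hz (sub_nonneg.2 ha0)]
    have e3 : ((Real.sqrt (2 * Real.pi))⁻¹) ^ 2 *
          Real.exp (a ^ 2 + -(z - a) ^ 2 / 2 + -(z + s0) ^ 2 / 2) =
        ((Real.sqrt (2 * Real.pi))⁻¹ * Real.exp (a ^ 2) * (2 / s0)) *
          Real.exp (-(z - a) ^ 2 / 2) * (s0 * Φ' (z + s0) * (1 / 2)) := by
      unfold Φ'
      rw [Real.exp_add, Real.exp_add]
      field_simp
    have e4 : ((Real.sqrt (2 * Real.pi))⁻¹ * Real.exp (a ^ 2) * (2 / s0)) *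
          Real.exp (-(z - a) ^ 2 / 2) * (s0 * Φ' (z + s0) * (1 / 2)) ≤
        ((Real.sqrt (2 * Real.pi))⁻¹ * Real.exp (a ^ 2) *
            (2 / s0 + 1 / ((s0 / 2) * Φ' (s0 / 2))) *
          (Real.exp (-(z - a) ^ 2 / 2) + Real.exp (-(z + a) ^ 2 / 2))) *
          (s0 * Φ' (z + s0) * (1 / 2)) := by
      refine mul_le_mul_of_nonneg_right ?_ (mul_nonneg (mul_nonneg hs0.le (Φ'_pos _).le) (by norm_num))
      refine mul_le_mul ?_ (le_add_of_nonneg_right (Real.exp_pos _).le) (Real.exp_pos _).le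
        (by positivity)
      refine mul_le_mul_of_nonneg_left ?_ (by positivity)
      have : (0:ℝ) ≤ 1 / ((s0 / 2) * Φ' (s0 / 2)) := by positivity
      linarith
    calc Φ' z ^ 2 = _ := e1
      _ ≤ _ := e2
      _ = _ := e3
      _ ≤ _ := e4
  · rcases le_total z (-s) with hz3 | hz2
    · -- Case 3 : z ≤ -s
      have hzs0 : z + s0 ≤ 0 := by linarith
      have h1 : s0 * Φ' z ≤ Φ (z + s) - Φ z := by
        have hAA : Φ' z * ((z + s0) - z) ≤ Φ (z + s0) - Φ z := by
          refine Φ_sub_ge (by linarith) fun u hu => Φ'_mono ?_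
          nlinarith [hu.1, hu.2]
        have hB : Φ (z + s0) ≤ Φ (z + s) := Φ_mono (by linarith)
        nlinarith [Φ'_pos z]
      have h2 : (1:ℝ) / 2 ≤ Φ (-z - s) + Φ z := by
        have hB := Φ_mono (show (0:ℝ) ≤ -z - s by linarith)
        have := Φ_zero
        have := Φ_nonneg z
        linarith
      refine finish_aux hGpos h1 h2 (mul_nonneg hs0.le (Φ'_pos _).le) (by norm_num) ?_
      have e1 : Φ' z ^ 2 = ((Real.sqrt (2 * Real.pi))⁻¹) ^ 2 *
          Real.exp (-z ^ 2 / 2 + -z ^ 2 / 2) := by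
        unfold Φ'; rw [Real.exp_add]; ring
      have e2 : ((Real.sqrt (2 * Real.pi))⁻¹) ^ 2 * Real.exp (-z ^ 2 / 2 + -z ^ 2 / 2) ≤
          ((Real.sqrt (2 * Real.pi))⁻¹) ^ 2 *
            Real.exp (a ^ 2 + -(z + a) ^ 2 / 2 + -z ^ 2 / 2) := by
        refine mul_le_mul_of_nonneg_left (Real.exp_le_exp.2 ?_) (by positivity)
        nlinarith [mul_nonneg (by linarith : (0:ℝ) ≤ a) (by linarith : (0:ℝ) ≤ -z)]
      have e3 : ((Real.sqrt (2 * Real.pi))⁻¹) ^ 2 *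
            Real.exp (a ^ 2 + -(z + a) ^ 2 / 2 + -z ^ 2 / 2) =
          ((Real.sqrt (2 * Real.pi))⁻¹ * Real.exp (a ^ 2) * (2 / s0)) *
            Real.exp (-(z + a) ^ 2 / 2) * (s0 * Φ' z * (1 / 2)) := by
        unfold Φ'
        rw [Real.exp_add, Real.exp_add]
        field_simp
      have e4 : ((Real.sqrt (2 * Real.pi))⁻¹ * Real.exp (a ^ 2) * (2 / s0)) *
            Real.exp (-(z + a) ^ 2 / 2) * (s0 * Φ' z * (1 / 2)) ≤
          ((Real.sqrt (2 * Real.pi))⁻¹ * Real.exp (a ^ 2) *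
              (2 / s0 + 1 / ((s0 / 2) * Φ' (s0 / 2))) *
            (Real.exp (-(z - a) ^ 2 / 2) + Real.exp (-(z + a) ^ 2 / 2))) *
            (s0 * Φ' z * (1 / 2)) := by
        refine mul_le_mul_of_nonneg_right ?_ (mul_nonneg (mul_nonneg hs0.le (Φ'_pos _).le) (by norm_num))
        refine mul_le_mul ?_ (le_add_of_nonneg_left (Real.exp_pos _).le) (Real.exp_pos _).le
          (by positivity)
        refine mul_le_mul_of_nonneg_left ?_ (by positivity)
        have : (0:ℝ) ≤ 1 / ((s0 / 2) * Φ' (s0 / 2)) := by positivity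
        linarith
      calc Φ' z ^ 2 = _ := e1
        _ ≤ _ := e2
        _ = _ := e3
        _ ≤ _ := e4
    · -- Case 2 : -s ≤ z ≤ 0
      have h1 : (s0 / 2) * Φ' (s0 / 2) ≤ Φ (z + s) - Φ z := by
        rcases le_total z (-(s0 / 2)) with hc | hc
        · have hAA : Φ' (s0 / 2) * ((0:ℝ) - -(s0 / 2)) ≤ Φ 0 - Φ (-(s0 / 2)) := by
            refine Φ_sub_ge (by linarith) fun u hu => Φ'_mono ?_
            nlinarith [hu.1, hu.2]
          have hB : Φ 0 ≤ Φ (z + s) := Φ_mono (by linarith)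
          have hC : Φ z ≤ Φ (-(s0 / 2)) := Φ_mono (by linarith)
          nlinarith [Φ'_pos (s0 / 2)]
        · have hAA : Φ' (s0 / 2) * ((s0 / 2) - 0) ≤ Φ (s0 / 2) - Φ 0 := by
            refine Φ_sub_ge (by linarith) fun u hu => Φ'_mono ?_
            nlinarith [hu.1, hu.2]
          have hB : Φ (s0 / 2) ≤ Φ (z + s) := Φ_mono (by linarith)
          have hC : Φ z ≤ Φ 0 := Φ_mono (by linarith)
          nlinarith [Φ'_pos (s0 / 2)]
      have h2 : Φ' (1 - z) ≤ Φ (-z - s) + Φ z := by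
        have hg := Φ_ge z
        rw [abs_of_nonpos hz] at hg
        rw [show (1:ℝ) - z = -z + 1 by ring]
        have := Φ_nonneg (-z - s)
        linarith
      refine finish_aux hGpos h1 h2 hc1.le (Φ'_pos _).le ?_
      have e1 : Φ' z ^ 2 = ((Real.sqrt (2 * Real.pi))⁻¹) ^ 2 *
          Real.exp (-z ^ 2 / 2 + -z ^ 2 / 2) := by
        unfold Φ'; rw [Real.exp_add]; ring
      have e2 : ((Real.sqrt (2 * Real.pi))⁻¹) ^ 2 * Real.exp (-z ^ 2 / 2 + -z ^ 2 / 2) ≤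
          ((Real.sqrt (2 * Real.pi))⁻¹) ^ 2 *
            Real.exp (a ^ 2 + -(z + a) ^ 2 / 2 + -(1 - z) ^ 2 / 2) := by
        refine mul_le_mul_of_nonneg_left (Real.exp_le_exp.2 ?_) (by positivity)
        nlinarith [mul_nonneg (sub_nonneg.2 ha1) (by linarith : (0:ℝ) ≤ (a + 1) / 2 - z)]
      have e3 : ((Real.sqrt (2 * Real.pi))⁻¹) ^ 2 *
            Real.exp (a ^ 2 + -(z + a) ^ 2 / 2 + -(1 - z) ^ 2 / 2) =
          ((Real.sqrt (2 * Real.pi))⁻¹ * Real.exp (a ^ 2) * (1 / ((s0 / 2) * Φ' (s0 / 2)))) *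
            Real.exp (-(z + a) ^ 2 / 2) * (((s0 / 2) * Φ' (s0 / 2)) * Φ' (1 - z)) := by
        unfold Φ'
        rw [Real.exp_add, Real.exp_add]
        have hx : Real.sqrt (2 * Real.pi) ≠ 0 := by positivity
        have hy : Real.exp (-(s0 / 2) ^ 2 / 2) ≠ 0 := Real.exp_ne_zero _
        field_simp
      have e4 : ((Real.sqrt (2 * Real.pi))⁻¹ * Real.exp (a ^ 2) *
              (1 / ((s0 / 2) * Φ' (s0 / 2)))) *
            Real.exp (-(z + a) ^ 2 / 2) * (((s0 / 2) * Φ' (s0 / 2)) * Φ' (1 - z)) ≤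
          ((Real.sqrt (2 * Real.pi))⁻¹ * Real.exp (a ^ 2) *
              (2 / s0 + 1 / ((s0 / 2) * Φ' (s0 / 2))) *
            (Real.exp (-(z - a) ^ 2 / 2) + Real.exp (-(z + a) ^ 2 / 2))) *
            (((s0 / 2) * Φ' (s0 / 2)) * Φ' (1 - z)) := by
        refine mul_le_mul_of_nonneg_right ?_
          (mul_nonneg hc1.le (Φ'_pos _).le)
        refine mul_le_mul ?_ (le_add_of_nonneg_left (Real.exp_pos _).le) (Real.exp_pos _).le
          (by positivity)
        refine mul_le_mul_of_nonneg_left ?_ (by positivity)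
        have : (0:ℝ) ≤ 2 / s0 := by positivity
        linarith
      calc Φ' z ^ 2 = _ := e1
        _ ≤ _ := e2
        _ = _ := e3
        _ ≤ _ := e4

lemma sym (s z : ℝ) : Φ' (z + s) ^ 2 / ((Φ (z + s) - Φ z) * (Φ (-z - s) + Φ z)) =
    Φ' (-z - s) ^ 2 / ((Φ (-z - s + s) - Φ (-z - s)) * (Φ (-(-z - s) - s) + Φ (-z - s))) := by
  have h1 : Φ (-z - s + s) = 1 - Φ z := by
    rw [show -z - s + s = -z by ring, Φ_neg]
  have h2 : Φ (-z - s) = 1 - Φ (z + s) := by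
    rw [show -z - s = -(z + s) by ring, Φ_neg]
  have h3 : Φ' (-z - s) = Φ' (z + s) := by
    rw [show -z - s = -(z + s) by ring, Φ'_even]
  rw [h1, h3, show -(-z - s) - s = z by ring, h2]
  ring_nf

set_option maxHeartbeats 4000000 in
/-- the integrals `J(s)` over all of `ℝ` are uniformly bounded for `s ≥ s0 > 0`. -/
theorem uniform_bound_J (s0 : ℝ) (hs0 : 0 < s0) :
    ∃ C : ℝ, ∀ s : ℝ, s0 ≤ s →
      Integrable (fun z : ℝ =>
        (Φ' z - Φ' (z + s)) ^ 2 / ((Φ (z + s) - Φ z) * (Φ (-z - s) + Φ z))) volume ∧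
      (∫ z : ℝ, (Φ' z - Φ' (z + s)) ^ 2 / ((Φ (z + s) - Φ z) * (Φ (-z - s) + Φ z))) ≤ C := by
  refine ⟨4 * ∫ z : ℝ, g s0 z, fun s hs => ?_⟩
  have hint_exp : Integrable (fun x : ℝ => Real.exp (-(1/2) * x ^ 2)) :=
    integrable_exp_neg_mul_sq (by norm_num)
  have hg1 : Integrable (fun z : ℝ => Real.exp (-(z - ga s0) ^ 2 / 2)) := by
    exact (hint_exp.comp_add_right (-(ga s0))).congr (Eventually.of_forall fun z =>
      congrArg Real.exp (by ring))
  have hg2 : Integrable (fun z : ℝ => Real.exp (-(z + ga s0) ^ 2 / 2)) := by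
    exact (hint_exp.comp_add_right (ga s0)).congr (Eventually.of_forall fun z =>
      congrArg Real.exp (by ring))
  have hg : Integrable (g s0) := by
    have h := (hg1.add hg2).const_mul (gB s0)
    exact h.congr (Eventually.of_forall fun z => rfl)
  have hgs : Integrable (fun z : ℝ => g s0 (-z - s)) := by
    exact ((hg.comp_neg).comp_add_right s).congr (Eventually.of_forall fun z =>
      congrArg (g s0) (by ring))
  have mΦ : Measurable Φ := Φ_mono.measurable
  have cΦ' : Continuous Φ' := by unfold Φ'; fun_prop
  have mf : AEStronglyMeasurable (fun z : ℝ =>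
      (Φ' z - Φ' (z + s)) ^ 2 / ((Φ (z + s) - Φ z) * (Φ (-z - s) + Φ z))) volume := by
    refine Measurable.aestronglyMeasurable (Measurable.div ?_ ?_)
    · exact ((cΦ'.sub (cΦ'.comp (continuous_id.add continuous_const))).pow 2).measurable
    · have hms : Measurable fun z : ℝ => -z - s := by fun_prop
      exact ((mΦ.comp (measurable_id.add_const s)).sub mΦ).mul ((mΦ.comp hms).add mΦ)
  have hd : ∀ z : ℝ, 0 < (Φ (z + s) - Φ z) * (Φ (-z - s) + Φ z) := by
    intro z
    have h1 : 0 < Φ (z + s) - Φ z := Φ_diff_pos (by linarith)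
    have h2 : 0 < Φ (-z - s) + Φ z := by
      have := Φ_pos (-z - s); have := Φ_pos z; linarith
    exact mul_pos h1 h2
  have hfnn : ∀ z : ℝ, 0 ≤ (Φ' z - Φ' (z + s)) ^ 2 /
      ((Φ (z + s) - Φ z) * (Φ (-z - s) + Φ z)) :=
    fun z => div_nonneg (sq_nonneg _) (hd z).le
  have hbound : ∀ z : ℝ, (Φ' z - Φ' (z + s)) ^ 2 /
      ((Φ (z + s) - Φ z) * (Φ (-z - s) + Φ z)) ≤ 2 * g s0 z + 2 * g s0 (-z - s) := by
    intro z
    have h1 := pt_bound s0 s z hs0 hs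
    have h2 : Φ' (z + s) ^ 2 / ((Φ (z + s) - Φ z) * (Φ (-z - s) + Φ z)) ≤ g s0 (-z - s) := by
      rw [sym]
      exact pt_bound s0 s (-z - s) hs0 hs
    have hnum : (Φ' z - Φ' (z + s)) ^ 2 ≤ 2 * Φ' z ^ 2 + 2 * Φ' (z + s) ^ 2 := by
      nlinarith [sq_nonneg (Φ' z + Φ' (z + s))]
    calc (Φ' z - Φ' (z + s)) ^ 2 / ((Φ (z + s) - Φ z) * (Φ (-z - s) + Φ z)) ≤
        (2 * Φ' z ^ 2 + 2 * Φ' (z + s) ^ 2) /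
          ((Φ (z + s) - Φ z) * (Φ (-z - s) + Φ z)) := by
          exact div_le_div_of_nonneg_right hnum (hd z).le
      _ = 2 * (Φ' z ^ 2 / ((Φ (z + s) - Φ z) * (Φ (-z - s) + Φ z))) +
          2 * (Φ' (z + s) ^ 2 / ((Φ (z + s) - Φ z) * (Φ (-z - s) + Φ z))) := by ring
      _ ≤ 2 * g s0 z + 2 * g s0 (-z - s) := by linarith
  have hG : Integrable (fun z : ℝ => 2 * g s0 z + 2 * g s0 (-z - s)) :=
    (hg.const_mul 2).add (hgs.const_mul 2)
  have hfint : Integrable (fun z : ℝ =>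
      (Φ' z - Φ' (z + s)) ^ 2 / ((Φ (z + s) - Φ z) * (Φ (-z - s) + Φ z))) volume := by
    refine hG.mono' mf (Eventually.of_forall fun z => ?_)
    rw [Real.norm_eq_abs, abs_of_nonneg (hfnn z)]
    exact hbound z
  refine ⟨hfint, ?_⟩
  have hIle : (∫ z : ℝ, (Φ' z - Φ' (z + s)) ^ 2 /
      ((Φ (z + s) - Φ z) * (Φ (-z - s) + Φ z))) ≤
      ∫ z : ℝ, (2 * g s0 z + 2 * g s0 (-z - s)) :=
    integral_mono hfint hG hbound
  have hI2 : (∫ z : ℝ, (2 * g s0 z + 2 * g s0 (-z - s))) = 4 * ∫ z : ℝ, g s0 z := by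
    rw [integral_add (hg.const_mul 2) (hgs.const_mul 2), integral_const_mul, integral_const_mul]
    have heq : (∫ z : ℝ, g s0 (-z - s)) = ∫ z : ℝ, g s0 z := by
      have h1 : (fun z : ℝ => g s0 (-z - s)) = fun z : ℝ => (fun w : ℝ => g s0 (-w)) (z + s) := by
        funext z; exact congrArg (g s0) (by ring)
      rw [h1, integral_add_right_eq_self (fun w : ℝ => g s0 (-w)) s,
        integral_neg_eq_self (g s0) volume]
    rw [heq]; ring
  linarith
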